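/- Let M ∈ ℕ, Δ ∈ ℂ, and k₁,…,k_M ∈ ℂ with G(a,b) := 1 + exp(i(k_a + k_b)) − 2Δ·exp(i k_a) nonzero for all a ≠ b in {1,…,M}, and define the amplitude A_M(P) := ε(P) · ∏_{1≤j<ℓ≤M} G(Pj, Pℓ)/G(j, ℓ). Let c be the cyclic permutation of {1,…,M} with c(m) = m+1 for m < M and c(M) = 1. Then for every permutation Q of {1,…,M}: A_M(Q) · ∏_{m=2}^{M} G(Qm, Q1) = (−1)^{M−1} · A_M(Q∘c) · ∏_{m=2}^{M} G(Q1, Qm); equivalently, A_M(Q)/A_M(Q∘c) = (−1)^{M−1} ∏_{m=2}^{M} (1 + exp(i(k_{Q1}+k_{Qm})) − 2Δ·exp(i k_{Q1}))/(1 + exp(i(k_{Q1}+k_{Qm})) − 2Δ·exp(i k_{Qm})), which yields the Bethe ansatz equations from the boundary conditions (Appendix E.C, eq. (E.34)). -/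
import Mathlib


open Finset

/-- `G(a,b) := 1 + exp(i(k_a + k_b)) − 2Δ·exp(i k_a)`. -/
noncomputable def Gfac (M : ℕ) (Δ : ℂ) (k : Fin M → ℂ) (a b : Fin M) : ℂ :=
  1 + Complex.exp (Complex.I * (k a + k b)) - 2 * Δ * Complex.exp (Complex.I * k a)

/-- The coordinate Bethe ansatz amplitude (E.18):
`A_M(P) = ε(P) · ∏_{j<ℓ} G(Pj, Pℓ)/G(j, ℓ)`. -/
noncomputable def ampXXZ (M : ℕ) (Δ : ℂ) (k : Fin M → ℂ) (P : Equiv.Perm (Fin M)) : ℂ :=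
  (Equiv.Perm.sign P : ℤ) *
    ∏ jl ∈ univ.filter (fun jl : Fin M × Fin M => jl.1 < jl.2),
      Gfac M Δ k (P jl.1) (P jl.2) / Gfac M Δ k jl.1 jl.2

section Aux

variable (n : ℕ)

/-- Pairs `(j, last)` with `j < last`, mapped by `jl ↦ (jl.1+1, 0)`, biject with `{m ≠ 0}`. -/
lemma key_a (F : Fin (n+1) → Fin (n+1) → ℂ) :
    (∏ jl ∈ (univ.filter (fun jl : Fin (n+1) × Fin (n+1) => jl.1 < jl.2)).filter
        (fun jl => jl.2 = Fin.last n), F (jl.1 + 1) (jl.2 + 1))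
      = ∏ m ∈ univ.filter (fun m : Fin (n+1) => m ≠ 0), F m 0 := by
  refine Finset.prod_nbij' (fun jl => jl.1 + 1) (fun m => (m - 1, Fin.last n)) ?_ ?_ ?_ ?_ ?_
  · rintro ⟨j, l⟩ hj
    simp only [mem_filter, mem_univ, true_and] at hj ⊢
    exact (Fin.add_one_pos j (Fin.lt_last_iff_ne_last.mpr (fun h => by
      obtain ⟨hlt, rfl⟩ := hj; exact absurd (h ▸ hlt) (lt_irrefl _)))).ne'
  · intro m hm
    simp only [mem_filter, mem_univ, true_and] at hm ⊢
    refine ⟨Fin.lt_last_iff_ne_last.mpr fun h => hm ?_, trivial⟩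
    have := congrArg (· + 1) h
    simpa [sub_add_cancel, Fin.last_add_one] using this
  · rintro ⟨j, l⟩ hj
    simp only [mem_filter, mem_univ, true_and] at hj
    obtain ⟨-, rfl⟩ := hj
    simp [add_sub_cancel_right]
  · intro m _; simp [sub_add_cancel]
  · rintro ⟨j, l⟩ hj
    simp only [mem_filter, mem_univ, true_and] at hj
    obtain ⟨-, rfl⟩ := hj
    simp [Fin.last_add_one]

/-- Pairs `(j, ℓ)` with `j < ℓ ≠ last` biject with pairs `(a, b)` with `0 ≠ a < b`
via `+1` componentwise. -/
lemma key_b (F : Fin (n+1) → Fin (n+1) → ℂ) :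
    (∏ jl ∈ (univ.filter (fun jl : Fin (n+1) × Fin (n+1) => jl.1 < jl.2)).filter
        (fun jl => ¬ jl.2 = Fin.last n), F (jl.1 + 1) (jl.2 + 1))
      = ∏ jl ∈ (univ.filter (fun jl : Fin (n+1) × Fin (n+1) => jl.1 < jl.2)).filter
          (fun jl => ¬ jl.1 = 0), F jl.1 jl.2 := by
  refine Finset.prod_nbij' (fun jl => (jl.1 + 1, jl.2 + 1)) (fun jl => (jl.1 - 1, jl.2 - 1))
    ?_ ?_ ?_ ?_ ?_
  · rintro ⟨j, l⟩ hj
    simp only [mem_filter, mem_univ, true_and] at hj ⊢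
    obtain ⟨hlt, hl⟩ := hj
    have hl' : l < Fin.last n := Fin.lt_last_iff_ne_last.mpr hl
    have hj' : j < Fin.last n := lt_trans hlt hl'
    refine ⟨?_, (Fin.add_one_pos j hj').ne'⟩
    rw [Fin.lt_iff_val_lt_val, Fin.val_add_one_of_lt hl', Fin.val_add_one_of_lt hj']
    exact Nat.succ_lt_succ hlt
  · rintro ⟨a, b⟩ hab
    simp only [mem_filter, mem_univ, true_and] at hab ⊢
    obtain ⟨hlt, ha0⟩ := hab
    have hb0 : b ≠ 0 := (Fin.pos_iff_ne_zero.mp (lt_trans (Fin.pos_iff_ne_zero.mpr ha0) hlt))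
    constructor
    · rw [Fin.lt_iff_val_lt_val, Fin.coe_sub_one, Fin.coe_sub_one, if_neg ha0, if_neg hb0]
      have h1 : 0 < (a : ℕ) := Fin.pos_iff_ne_zero.mpr ha0
      have h2 : (a : ℕ) < b := hlt
      omega
    · intro h
      have := congrArg (· + 1) h
      simp only [sub_add_cancel, Fin.last_add_one] at this
      exact hb0 this
  · rintro ⟨j, l⟩ _; simp [add_sub_cancel_right]
  · rintro ⟨a, b⟩ _; simp [sub_add_cancel]
  · rintro ⟨j, l⟩ _; rfl

/-- Pairs `(0, ℓ)` with `0 < ℓ` biject with `{m ≠ 0}`. -/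
lemma key_c (F : Fin (n+1) → Fin (n+1) → ℂ) :
    (∏ jl ∈ (univ.filter (fun jl : Fin (n+1) × Fin (n+1) => jl.1 < jl.2)).filter
        (fun jl => jl.1 = 0), F jl.1 jl.2)
      = ∏ m ∈ univ.filter (fun m : Fin (n+1) => m ≠ 0), F 0 m := by
  refine Finset.prod_nbij' (fun jl => jl.2) (fun m => (0, m)) ?_ ?_ ?_ ?_ ?_
  · rintro ⟨j, l⟩ hj
    simp only [mem_filter, mem_univ, true_and] at hj ⊢
    obtain ⟨hlt, rfl⟩ := hj
    exact hlt.ne'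
  · intro m hm
    simp only [mem_filter, mem_univ, true_and] at hm ⊢
    exact ⟨Fin.pos_iff_ne_zero.mpr hm, trivial⟩
  · rintro ⟨j, l⟩ hj
    simp only [mem_filter, mem_univ, true_and] at hj
    obtain ⟨-, rfl⟩ := hj; rfl
  · intro m _; rfl
  · rintro ⟨j, l⟩ hj
    simp only [mem_filter, mem_univ, true_and] at hj
    obtain ⟨-, rfl⟩ := hj; rfl

/-- The combinatorial core: cycling the indices by `+1` trades the factors `F 0 m`
for the factors `F m 0`. -/
lemma key_prod (F : Fin (n+1) → Fin (n+1) → ℂ) :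
    (∏ jl ∈ univ.filter (fun jl : Fin (n+1) × Fin (n+1) => jl.1 < jl.2),
        F (jl.1 + 1) (jl.2 + 1)) *
      ∏ m ∈ univ.filter (fun m : Fin (n+1) => m ≠ 0), F 0 m
    = (∏ jl ∈ univ.filter (fun jl : Fin (n+1) × Fin (n+1) => jl.1 < jl.2), F jl.1 jl.2) *
      ∏ m ∈ univ.filter (fun m : Fin (n+1) => m ≠ 0), F m 0 := by
  rw [← Finset.prod_filter_mul_prod_filter_not
      (univ.filter (fun jl : Fin (n+1) × Fin (n+1) => jl.1 < jl.2)) (fun jl => jl.2 = Fin.last n)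
      (fun jl => F (jl.1 + 1) (jl.2 + 1)),
    ← Finset.prod_filter_mul_prod_filter_not
      (univ.filter (fun jl : Fin (n+1) × Fin (n+1) => jl.1 < jl.2)) (fun jl => jl.1 = 0)
      (fun jl => F jl.1 jl.2),
    key_a, key_b, key_c]
  ring

end Aux

lemma alg_aux (s a d x y p q : ℂ) (hd : d ≠ 0) (ha : a * a = 1) (h : y * q = x * p) :
    s * (x / d) * p = a * (s * a * (y / d)) * q := by
  field_simp
  linear_combination (-s) * h + (-(s * y * q)) * ha

/-- Appendix E.C, eq. (E.34): with `c` the cyclic permutation `m ↦ m+1` (`M ↦ 1`),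
for every permutation `Q`,
`A_M(Q) · ∏_{m=2}^{M} G(Qm, Q1) = (−1)^{M−1} · A_M(Q∘c) · ∏_{m=2}^{M} G(Q1, Qm)`,
which yields the Bethe ansatz equations from the boundary conditions. -/
theorem eq_E_34 (M : ℕ) (hM : 0 < M) (Δ : ℂ) (k : Fin M → ℂ)
    (hG : ∀ a b : Fin M, a ≠ b → Gfac M Δ k a b ≠ 0)
    (Q : Equiv.Perm (Fin M)) :
    ampXXZ M Δ k Q *
        ∏ m ∈ univ.filter (fun m : Fin M => m ≠ ⟨0, hM⟩), Gfac M Δ k (Q m) (Q ⟨0, hM⟩)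
      = (-1 : ℂ) ^ (M - 1) * ampXXZ M Δ k (Q * finRotate M) *
          ∏ m ∈ univ.filter (fun m : Fin M => m ≠ ⟨0, hM⟩), Gfac M Δ k (Q ⟨0, hM⟩) (Q m) := by
  obtain ⟨n, rfl⟩ : ∃ n, M = n + 1 := ⟨M - 1, (Nat.succ_pred_eq_of_pos hM).symm⟩
  have h0 : (⟨0, hM⟩ : Fin (n+1)) = 0 := rfl
  simp only [h0, Nat.add_sub_cancel]
  unfold ampXXZ
  rw [Finset.prod_div_distrib, Finset.prod_div_distrib]
  have hD : (∏ jl ∈ univ.filter (fun jl : Fin (n+1) × Fin (n+1) => jl.1 < jl.2),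
      Gfac (n+1) Δ k jl.1 jl.2) ≠ 0 :=
    Finset.prod_ne_zero_iff.mpr fun jl hjl => hG _ _ (ne_of_lt (mem_filter.mp hjl).2)
  have hprod : (∏ jl ∈ univ.filter (fun jl : Fin (n+1) × Fin (n+1) => jl.1 < jl.2),
        Gfac (n+1) Δ k ((Q * finRotate (n+1)) jl.1) ((Q * finRotate (n+1)) jl.2))
      = ∏ jl ∈ univ.filter (fun jl : Fin (n+1) × Fin (n+1) => jl.1 < jl.2),
        Gfac (n+1) Δ k (Q (jl.1 + 1)) (Q (jl.2 + 1)) := by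
    refine Finset.prod_congr rfl fun jl _ => ?_
    simp [Equiv.Perm.mul_apply, finRotate_succ_apply]
  have hsign : ((Equiv.Perm.sign (Q * finRotate (n+1)) : ℤ) : ℂ)
      = ((Equiv.Perm.sign Q : ℤ) : ℂ) * (-1) ^ n := by
    rw [map_mul, sign_finRotate]
    push_cast
    ring
  have heven : ((-1 : ℂ)) ^ n * (-1) ^ n = 1 := by
    rw [← pow_add]
    exact Even.neg_one_pow ⟨n, rfl⟩
  have hkey := key_prod n (fun a b => Gfac (n+1) Δ k (Q a) (Q b))
  rw [hprod, hsign]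
  exact alg_aux _ _ _ _ _ _ _ hD heven hkey
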